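/- Under the standing hypotheses, let η̃ > 0 and assume 0 < η < e^{σ}, e^{σ} + η < 1, log(1 + ηe^{−σ}) < η̃ and log(1/(1 − ηe^{−σ})) < η̃. Let n ∈ ℕ satisfy ((n+1)/n)·log(1 + ηe^{−σ}) < η̃ and ((n+1)/n)·log(1/(1 − ηe^{−σ})) < η̃, and let x ∈ B₁ satisfy |P_U G(j+1,x)| ≤ 1 for j = 0,…,n−1. Then for every t ∈ [0,1]: e^{(σ−η̃)(t+n)}|P_L x| ≤ |P_L G(t+n,x)| ≤ e^{(σ+η̃)(t+n)}|P_L x| and e^{(u−η̃)(t+n)}|P_U x| ≤ |P_U G(t+n,x)| ≤ e^{(u+η̃)(t+n)}|P_U x|. -/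

import Mathlib

noncomputable section
open Real Set

abbrev R3 := EuclideanSpace ℝ (Fin 3)

/-- Orthogonal projection onto `L = ℝe₁ ⊕ ℝe₂`. -/
def PL (x : R3) : R3 := WithLp.toLp 2 fun (i : Fin 3) => if (i : ℕ) = 2 then 0 else x i

/-- Orthogonal projection onto `U = ℝe₃`. -/
def PU (x : R3) : R3 := WithLp.toLp 2 fun (i : Fin 3) => if (i : ℕ) = 2 then x i else 0

/-- The plane `L = ℝe₁ ⊕ ℝe₂`. -/
def Lset : Set R3 := {x | x 2 = 0}

/-- The line `U = ℝe₃`. -/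
def Uset : Set R3 := {x | x 0 = 0 ∧ x 1 = 0}

/-- `B₁ = {x : |P_L x| ≤ 1, |P_U x| ≤ 1}`. -/
def B1 : Set R3 := {x | ‖PL x‖ ≤ 1 ∧ ‖PU x‖ ≤ 1}

/-- The linearized flow `T(t)`. -/
def Tmap (σ μ u t : ℝ) (x : R3) : R3 := WithLp.toLp 2 fun (i : Fin 3) =>
  if (i : ℕ) = 0 then exp (σ * t) * (cos (μ * t) * x 0 + sin (μ * t) * x 1)
  else if (i : ℕ) = 1 then exp (σ * t) * (-(sin (μ * t)) * x 0 + cos (μ * t) * x 1)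
  else exp (u * t) * x 2

/-- A C¹ flow on ℝ³. -/
def IsC1Flow (G : ℝ → R3 → R3) : Prop :=
  ContDiff ℝ 1 (fun p : ℝ × R3 => G p.1 p.2) ∧ (∀ x, G 0 x = x) ∧
    ∀ s t x, G (t + s) x = G t (G s x)

/-- `M` is invariant under the flow `G` in the set `N`. -/
def InvariantIn (G : ℝ → R3 → R3) (M N : Set R3) : Prop :=
  ∀ x ∈ M ∩ N, ∀ I : Set ℝ, (0 : ℝ) ∈ I → I.OrdConnected →
    (∀ t ∈ I, G t x ∈ N) → ∀ t ∈ I, G t x ∈ M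

/- ### auxiliary lemmas -/

lemma PL_add' (x y : R3) : PL (x + y) = PL x + PL y := by
  ext i; by_cases h : (i:ℕ) = 2 <;> simp [PL, h]
lemma PL_smul' (c : ℝ) (x : R3) : PL (c • x) = c • PL x := by
  ext i; by_cases h : (i:ℕ) = 2 <;> simp [PL, h]
lemma PU_add' (x y : R3) : PU (x + y) = PU x + PU y := by
  ext i; by_cases h : (i:ℕ) = 2 <;> simp [PU, h]
lemma PU_smul' (c : ℝ) (x : R3) : PU (c • x) = c • PU x := by
  ext i; by_cases h : (i:ℕ) = 2 <;> simp [PU, h]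
lemma PL_PU' (x : R3) : PL (PU x) = 0 := by
  ext i; by_cases h : (i:ℕ) = 2 <;> simp [PL, PU, h]
lemma PU_PL' (x : R3) : PU (PL x) = 0 := by
  ext i; by_cases h : (i:ℕ) = 2 <;> simp [PL, PU, h]
lemma PL_idem (x : R3) : PL (PL x) = PL x := by
  ext i; by_cases h : (i:ℕ) = 2 <;> simp [PL, h]
lemma PU_idem (x : R3) : PU (PU x) = PU x := by
  ext i; by_cases h : (i:ℕ) = 2 <;> simp [PU, h]
lemma PU_add_PL (x : R3) : PU x + PL x = x := by
  ext i; by_cases h : (i:ℕ) = 2 <;> simp [PL, PU, h]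

lemma norm_PL_le (x : R3) : ‖PL x‖ ≤ ‖x‖ := by
  rw [EuclideanSpace.norm_eq, EuclideanSpace.norm_eq]
  apply Real.sqrt_le_sqrt
  rw [Fin.sum_univ_three, Fin.sum_univ_three]
  simp [PL]
  nlinarith [sq_abs (x 2), abs_nonneg (x 2), sq_nonneg (x 2)]

lemma norm_PU_le (x : R3) : ‖PU x‖ ≤ ‖x‖ := by
  rw [EuclideanSpace.norm_eq, EuclideanSpace.norm_eq]
  apply Real.sqrt_le_sqrt
  rw [Fin.sum_univ_three, Fin.sum_univ_three]
  simp [PU]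
  positivity

def PLc : R3 →L[ℝ] R3 :=
  LinearMap.toContinuousLinearMap
    { toFun := PL, map_add' := PL_add', map_smul' := PL_smul' }
def PUc : R3 →L[ℝ] R3 :=
  LinearMap.toContinuousLinearMap
    { toFun := PU, map_add' := PU_add', map_smul' := PU_smul' }
lemma PLc_apply (x : R3) : PLc x = PL x := rfl
lemma PUc_apply (x : R3) : PUc x = PU x := rfl

lemma PL_Tmap_PL (σ μ u t : ℝ) (x : R3) : PL (Tmap σ μ u t (PL x)) = Tmap σ μ u t (PL x) := by
  ext i; fin_cases i <;> simp [PL, Tmap]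
lemma PU_Tmap_PU (σ μ u t : ℝ) (x : R3) : PU (Tmap σ μ u t (PU x)) = Tmap σ μ u t (PU x) := by
  ext i; fin_cases i <;> simp [PL, PU, Tmap]

lemma norm_Tmap_PL (σ μ u t : ℝ) (x : R3) :
    ‖Tmap σ μ u t (PL x)‖ = exp (σ * t) * ‖PL x‖ := by
  rw [EuclideanSpace.norm_eq, EuclideanSpace.norm_eq, Fin.sum_univ_three, Fin.sum_univ_three]
  simp only [Tmap, PL, Real.norm_eq_abs, sq_abs]
  norm_num
  have key : (exp (σ*t) * (cos (μ*t) * x 0 + sin (μ*t) * x 1))^2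
      + (exp (σ*t) * (-(sin (μ*t) * x 0) + cos (μ*t) * x 1))^2
      = exp (σ*t)^2 * (x 0^2 + x 1^2) := by
    have := sin_sq_add_cos_sq (μ*t); nlinarith [this]
  rw [key, Real.sqrt_mul (sq_nonneg _), Real.sqrt_sq (exp_pos _).le]

lemma norm_Tmap_PU (σ μ u t : ℝ) (x : R3) :
    ‖Tmap σ μ u t (PU x)‖ = exp (u * t) * ‖PU x‖ := by
  rw [EuclideanSpace.norm_eq, EuclideanSpace.norm_eq, Fin.sum_univ_three, Fin.sum_univ_three]
  simp only [Tmap, PU, Real.norm_eq_abs, sq_abs]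
  norm_num
  rw [mul_pow, Real.sqrt_mul (sq_nonneg _), Real.sqrt_sq (exp_pos _).le]

lemma PL_eq_zero_of_Uset {z : R3} (hz : z ∈ Uset) : PL z = 0 := by
  obtain ⟨h0, h1⟩ := hz
  ext i; fin_cases i <;> simp [PL, h0, h1] <;> rfl
lemma PU_eq_zero_of_Lset {z : R3} (hz : z ∈ Lset) : PU z = 0 := by
  ext i; fin_cases i <;> simp [PU, hz] <;> try rfl
  exact hz

lemma mvt_key {η : ℝ} (G : ℝ → R3 → R3) (t : ℝ)
    (hdiff : Differentiable ℝ (G t))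
    (P : R3 →L[ℝ] R3) (hP : ∀ z, ‖P z‖ ≤ ‖z‖)
    (a v w : R3)
    (hD : ∀ s ∈ Icc (0:ℝ) 1, ‖fderiv ℝ (G t) (a + s • v) v - w‖ ≤ η * ‖v‖)
    (hPw : P w = w)
    (hPa : P (G t a) = 0) :
    ‖P (G t (a + v)) - w‖ ≤ η * ‖v‖ := by
  set g : ℝ → R3 := fun s => P (G t (a + s • v)) - s • w with hg
  have hderiv : ∀ s ∈ Icc (0:ℝ) 1,
      HasDerivWithinAt g ((fun s => P (fderiv ℝ (G t) (a + s • v) v) - w) s) (Icc 0 1) s := by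
    intro s _
    have h1 : HasDerivAt (fun s : ℝ => a + s • v) v s := by
      simpa using ((hasDerivAt_id s).smul_const v).const_add a
    have h2 : HasDerivAt (fun s : ℝ => G t (a + s • v)) (fderiv ℝ (G t) (a + s • v) v) s :=
      ((hdiff (a + s • v)).hasFDerivAt).comp_hasDerivAt s h1
    have h3 : HasDerivAt (fun s : ℝ => P (G t (a + s • v))) (P (fderiv ℝ (G t) (a + s • v) v)) s :=
      (P.hasFDerivAt.comp_hasDerivAt s h2)
    have h4 : HasDerivAt (fun s : ℝ => s • w) w s := by
      simpa using (hasDerivAt_id s).smul_const w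
    exact (h3.sub h4).hasDerivWithinAt
  have hbound : ∀ s ∈ Icc (0:ℝ) 1,
      ‖(fun s => P (fderiv ℝ (G t) (a + s • v) v) - w) s‖ ≤ η * ‖v‖ := by
    intro s hs
    calc ‖P (fderiv ℝ (G t) (a + s • v) v) - w‖
        = ‖P (fderiv ℝ (G t) (a + s • v) v - w)‖ := by rw [map_sub, hPw]
      _ ≤ ‖fderiv ℝ (G t) (a + s • v) v - w‖ := hP _
      _ ≤ η * ‖v‖ := hD s hs
  have h := norm_image_sub_le_of_norm_deriv_le_segment' hderiv
    (fun s hs => hbound s (Ico_subset_Icc_self hs)) 1 (by norm_num : (1:ℝ) ∈ Icc (0:ℝ) 1)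
  simpa [hg, hPa] using h

lemma one_step (u σ μ η rB : ℝ) (hu : 0 < u) (hσ : σ < 0) (hη : 0 < η)
    (hB1B : B1 ⊆ Metric.closedBall (0 : R3) rB)
    (G : ℝ → R3 → R3) (hG : IsC1Flow G)
    (hD2 : ∀ t ∈ Icc (0:ℝ) 1, ∀ x ∈ B1, ∀ y : R3,
      ‖fderiv ℝ (G t) x y - Tmap σ μ u t y‖ ≤ η * ‖y‖)
    (hGB : ∀ t ∈ Icc (0:ℝ) 1, ∀ x ∈ B1, G t x ∈ Metric.closedBall (0 : R3) rB)
    (hLinv : InvariantIn G Lset (Metric.closedBall 0 rB))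
    (hUinv : InvariantIn G Uset (Metric.closedBall 0 rB))
    (t : ℝ) (ht : t ∈ Icc (0:ℝ) 1) (y : R3) (hy : y ∈ B1) :
    ((1 - η * exp (-σ)) * exp (σ*t) * ‖PL y‖ ≤ ‖PL (G t y)‖ ∧
     ‖PL (G t y)‖ ≤ (1 + η * exp (-σ)) * exp (σ*t) * ‖PL y‖) ∧
    ((1 - η * exp (-σ)) * exp (u*t) * ‖PU y‖ ≤ ‖PU (G t y)‖ ∧
     ‖PU (G t y)‖ ≤ (1 + η * exp (-σ)) * exp (u*t) * ‖PU y‖) := by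
  have hdiff : Differentiable ℝ (G t) := fun z =>
    ((hG.1.differentiable one_ne_zero) (t, z)).comp z
      (DifferentiableAt.prodMk (differentiableAt_const t) differentiableAt_id)
  have hyL : ‖PL y‖ ≤ 1 := hy.1
  have hyU : ‖PU y‖ ≤ 1 := hy.2
  -- PL part
  have hPUyB1 : PU y ∈ B1 := by
    constructor
    · rw [PL_PU']; simp
    · rw [PU_idem]; exact hyU
  have hPLyB1 : PL y ∈ B1 := by
    constructor
    · rw [PL_idem]; exact hyL
    · rw [PU_PL']; simp
  have hmemL : ∀ s ∈ Icc (0:ℝ) 1, PU y + s • PL y ∈ B1 := by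
    intro s hs
    constructor
    · rw [PL_add', PL_PU', PL_smul', PL_idem, zero_add, norm_smul]
      calc |s| * ‖PL y‖ ≤ 1 * 1 := by
            apply mul_le_mul _ hyL (norm_nonneg _) zero_le_one
            rw [abs_of_nonneg hs.1]; exact hs.2
        _ = 1 := by norm_num
    · rw [PU_add', PU_idem, PU_smul', PU_PL', smul_zero, add_zero]; exact hyU
  have hmemU : ∀ s ∈ Icc (0:ℝ) 1, PL y + s • PU y ∈ B1 := by
    intro s hs
    constructor
    · rw [PL_add', PL_idem, PL_smul', PL_PU', smul_zero, add_zero]; exact hyL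
    · rw [PU_add', PU_PL', PU_smul', PU_idem, zero_add, norm_smul]
      calc |s| * ‖PU y‖ ≤ 1 * 1 := by
            apply mul_le_mul _ hyU (norm_nonneg _) zero_le_one
            rw [abs_of_nonneg hs.1]; exact hs.2
        _ = 1 := by norm_num
  have hGU : G t (PU y) ∈ Uset := by
    refine hUinv (PU y) ⟨⟨?_, ?_⟩, hB1B hPUyB1⟩ (Icc 0 1) ⟨le_rfl, zero_le_one⟩
      ordConnected_Icc (fun s hs => hGB s hs _ hPUyB1) t ht
    · simp [PU]
    · simp [PU]
  have hGL : G t (PL y) ∈ Lset := by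
    refine hLinv (PL y) ⟨?_, hB1B hPLyB1⟩ (Icc 0 1) ⟨le_rfl, zero_le_one⟩
      ordConnected_Icc (fun s hs => hGB s hs _ hPLyB1) t ht
    simp [Lset, PL]
  have keyL : ‖PL (G t y) - Tmap σ μ u t (PL y)‖ ≤ η * ‖PL y‖ := by
    have h := mvt_key G t hdiff PLc (fun z => norm_PL_le z) (PU y) (PL y)
      (Tmap σ μ u t (PL y))
      (fun s hs => hD2 t ht _ (hmemL s hs) (PL y))
      (PL_Tmap_PL σ μ u t y)
      (by rw [PLc_apply, PL_eq_zero_of_Uset hGU])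
    rwa [PLc_apply, PU_add_PL] at h
  have keyU : ‖PU (G t y) - Tmap σ μ u t (PU y)‖ ≤ η * ‖PU y‖ := by
    have h := mvt_key G t hdiff PUc (fun z => norm_PU_le z) (PL y) (PU y)
      (Tmap σ μ u t (PU y))
      (fun s hs => hD2 t ht _ (hmemU s hs) (PU y))
      (PU_Tmap_PU σ μ u t y)
      (by rw [PUc_apply, PU_eq_zero_of_Lset hGL])
    rw [PUc_apply] at h
    rwa [show PL y + PU y = y from by rw [add_comm, PU_add_PL]] at h
  have habsL : |‖PL (G t y)‖ - exp (σ*t) * ‖PL y‖| ≤ η * ‖PL y‖ := by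
    rw [← norm_Tmap_PL σ μ u t y]
    exact (abs_norm_sub_norm_le _ _).trans keyL
  have habsU : |‖PU (G t y)‖ - exp (u*t) * ‖PU y‖| ≤ η * ‖PU y‖ := by
    rw [← norm_Tmap_PU σ μ u t y]
    exact (abs_norm_sub_norm_le _ _).trans keyU
  have hexpL : η ≤ η * exp (-σ) * exp (σ*t) := by
    have h1 : (1:ℝ) ≤ exp (-σ) * exp (σ*t) := by
      rw [← exp_add]
      apply one_le_exp
      nlinarith [ht.1, ht.2]
    nlinarith
  have hexpU : η ≤ η * exp (-σ) * exp (u*t) := by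
    have h1 : (1:ℝ) ≤ exp (-σ) * exp (u*t) := by
      rw [← exp_add]
      apply one_le_exp
      nlinarith [ht.1, ht.2]
    nlinarith
  obtain ⟨hL1, hL2⟩ := abs_le.mp habsL
  obtain ⟨hU1, hU2⟩ := abs_le.mp habsU
  refine ⟨⟨?_, ?_⟩, ?_, ?_⟩
  · nlinarith [norm_nonneg (PL y)]
  · nlinarith [norm_nonneg (PL y)]
  · nlinarith [norm_nonneg (PU y)]
  · nlinarith [norm_nonneg (PU y)]


set_option maxHeartbeats 1600000 in
theorem statement3
    (u σ μ η rB : ℝ) (hu : 0 < u) (hσ : σ < 0) (hμ : 0 < μ) (hη : 0 < η)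
    (hB1B : B1 ⊆ Metric.closedBall (0 : R3) rB)
    (G : ℝ → R3 → R3) (hG : IsC1Flow G) (hG0 : ∀ t : ℝ, G t 0 = 0)
    (hD2 : ∀ t ∈ Icc (0:ℝ) 1, ∀ x ∈ B1, ∀ y : R3,
      ‖fderiv ℝ (G t) x y - Tmap σ μ u t y‖ ≤ η * ‖y‖)
    (hGB : ∀ t ∈ Icc (0:ℝ) 1, ∀ x ∈ B1, G t x ∈ Metric.closedBall (0 : R3) rB)
    (hLinv : InvariantIn G Lset (Metric.closedBall 0 rB))
    (hUinv : InvariantIn G Uset (Metric.closedBall 0 rB))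
    (ηt : ℝ) (hηt : 0 < ηt)
    (hησ : η < exp σ) (hησ1 : exp σ + η < 1)
    (hlog1 : Real.log (1 + η * exp (-σ)) < ηt)
    (hlog2 : Real.log (1 / (1 - η * exp (-σ))) < ηt)
    (n : ℕ) (hn : 0 < n)
    (hn1 : ((n : ℝ) + 1) / n * Real.log (1 + η * exp (-σ)) < ηt)
    (hn2 : ((n : ℝ) + 1) / n * Real.log (1 / (1 - η * exp (-σ))) < ηt)
    (x : R3) (hx : x ∈ B1)
    (hPU : ∀ j : ℕ, j < n → ‖PU (G ((j : ℝ) + 1) x)‖ ≤ 1) :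
    ∀ t ∈ Icc (0:ℝ) 1,
      exp ((σ - ηt) * (t + n)) * ‖PL x‖ ≤ ‖PL (G (t + n) x)‖ ∧
      ‖PL (G (t + n) x)‖ ≤ exp ((σ + ηt) * (t + n)) * ‖PL x‖ ∧
      exp ((u - ηt) * (t + n)) * ‖PU x‖ ≤ ‖PU (G (t + n) x)‖ ∧
      ‖PU (G (t + n) x)‖ ≤ exp ((u + ηt) * (t + n)) * ‖PU x‖ := by
  set A : ℝ := 1 + η * exp (-σ) with hA
  set Bc : ℝ := 1 - η * exp (-σ) with hBc
  have hexpneg : exp (-σ) * exp σ = 1 := by rw [← exp_add]; simp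
  have hBcpos : 0 < Bc := by
    have : η * exp (-σ) < exp σ * exp (-σ) := by
      apply mul_lt_mul_of_pos_right hησ (exp_pos _)
    nlinarith
  have hApos : (1:ℝ) ≤ A := by nlinarith [exp_pos (-σ), hη.le]
  have hA0 : (0:ℝ) < A := by linarith
  have hAeσ : A * exp σ = exp σ + η := by
    have : η * exp (-σ) * exp σ = η := by rw [mul_assoc, hexpneg, mul_one]
    rw [hA]; nlinarith [this]
  -- iteration
  have iter : ∀ j : ℕ, j ≤ n → (G (j:ℝ) x ∈ B1 ∧
      (Bc^j * exp σ ^ j * ‖PL x‖ ≤ ‖PL (G (j:ℝ) x)‖ ∧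
       ‖PL (G (j:ℝ) x)‖ ≤ A^j * exp σ ^ j * ‖PL x‖) ∧
      (Bc^j * exp u ^ j * ‖PU x‖ ≤ ‖PU (G (j:ℝ) x)‖ ∧
       ‖PU (G (j:ℝ) x)‖ ≤ A^j * exp u ^ j * ‖PU x‖)) := by
    intro j
    induction j with
    | zero =>
      intro _
      simp only [Nat.cast_zero, hG.2.1, pow_zero, one_mul]
      exact ⟨hx, ⟨le_rfl, le_rfl⟩, ⟨le_rfl, le_rfl⟩⟩
    | succ j ih =>
      intro hjn
      obtain ⟨hB1j, ⟨hL1, hL2⟩, ⟨hU1, hU2⟩⟩ := ih (Nat.le_of_succ_le hjn)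
      have hcast : ((j+1 : ℕ) : ℝ) = 1 + (j:ℝ) := by push_cast; ring
      have hstep : G ((j+1 : ℕ) : ℝ) x = G 1 (G (j:ℝ) x) := by
        rw [hcast, hG.2.2]
      have hone := one_step u σ μ η rB hu hσ hη hB1B G hG hD2 hGB hLinv hUinv
        1 ⟨zero_le_one, le_rfl⟩ (G (j:ℝ) x) hB1j
      simp only [mul_one] at hone
      obtain ⟨⟨hoL1, hoL2⟩, ⟨hoU1, hoU2⟩⟩ := hone
      have hmemPL : ‖PL (G ((j+1 : ℕ) : ℝ) x)‖ ≤ 1 := by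
        rw [hstep]
        calc ‖PL (G 1 (G (j:ℝ) x))‖ ≤ A * exp σ * ‖PL (G (j:ℝ) x)‖ := hoL2
          _ = (exp σ + η) * ‖PL (G (j:ℝ) x)‖ := by rw [hAeσ]
          _ ≤ 1 * 1 := by
              apply mul_le_mul hησ1.le hB1j.1 (norm_nonneg _)
              nlinarith [exp_pos σ]
          _ = 1 := by norm_num
      have hmemPU : ‖PU (G ((j+1 : ℕ) : ℝ) x)‖ ≤ 1 := by
        have := hPU j (Nat.lt_of_succ_le hjn)
        rwa [show ((j:ℝ) + 1) = ((j+1 : ℕ) : ℝ) from by push_cast; ring] at this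
      refine ⟨⟨hmemPL, hmemPU⟩, ⟨?_, ?_⟩, ⟨?_, ?_⟩⟩
      · rw [hstep]
        calc Bc^(j+1) * exp σ ^ (j+1) * ‖PL x‖
            = Bc * exp σ * (Bc^j * exp σ ^ j * ‖PL x‖) := by ring
          _ ≤ Bc * exp σ * ‖PL (G (j:ℝ) x)‖ := by
              apply mul_le_mul_of_nonneg_left hL1 (by positivity)
          _ ≤ ‖PL (G 1 (G (j:ℝ) x))‖ := hoL1
      · rw [hstep]
        calc ‖PL (G 1 (G (j:ℝ) x))‖ ≤ A * exp σ * ‖PL (G (j:ℝ) x)‖ := hoL2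
          _ ≤ A * exp σ * (A^j * exp σ ^ j * ‖PL x‖) := by
              apply mul_le_mul_of_nonneg_left hL2 (by positivity)
          _ = A^(j+1) * exp σ ^ (j+1) * ‖PL x‖ := by ring
      · rw [hstep]
        calc Bc^(j+1) * exp u ^ (j+1) * ‖PU x‖
            = Bc * exp u * (Bc^j * exp u ^ j * ‖PU x‖) := by ring
          _ ≤ Bc * exp u * ‖PU (G (j:ℝ) x)‖ := by
              apply mul_le_mul_of_nonneg_left hU1 (by positivity)
          _ ≤ ‖PU (G 1 (G (j:ℝ) x))‖ := hoU1
      · rw [hstep]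
        calc ‖PU (G 1 (G (j:ℝ) x))‖ ≤ A * exp u * ‖PU (G (j:ℝ) x)‖ := hoU2
          _ ≤ A * exp u * (A^j * exp u ^ j * ‖PU x‖) := by
              apply mul_le_mul_of_nonneg_left hU2 (by positivity)
          _ = A^(j+1) * exp u ^ (j+1) * ‖PU x‖ := by ring
  obtain ⟨hB1n, ⟨hLn1, hLn2⟩, ⟨hUn1, hUn2⟩⟩ := iter n le_rfl
  -- exponent estimates
  have hnpos : (0:ℝ) < n := by exact_mod_cast hn
  intro t ht
  have hstep : G (t + (n:ℝ)) x = G t (G (n:ℝ) x) := hG.2.2 (n:ℝ) t x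
  have hone := one_step u σ μ η rB hu hσ hη hB1B G hG hD2 hGB hLinv hUinv
    t ht (G (n:ℝ) x) hB1n
  obtain ⟨⟨hoL1, hoL2⟩, ⟨hoU1, hoU2⟩⟩ := hone
  have hAbound : A ^ (n+1) ≤ exp (ηt * (t + n)) := by
    have h1 : A ^ (n+1) = exp (((n:ℝ)+1) * log A) := by
      rw [show ((n:ℝ)+1) = ((n+1 : ℕ) : ℝ) from by push_cast; ring,
        ← Real.log_pow, Real.exp_log (pow_pos hA0 _)]
    rw [h1]
    apply exp_le_exp.mpr
    have h2 : ((n:ℝ)+1) * log A = (((n:ℝ)+1)/n * log A) * n := by field_simp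
    have h3 : ((n:ℝ)+1) * log A < ηt * n := by
      rw [h2]; exact mul_lt_mul_of_pos_right hn1 hnpos
    nlinarith [ht.1, hηt]
  have hBbound : exp (-(ηt * (t + n))) ≤ Bc ^ (n+1) := by
    have h1 : Bc ^ (n+1) = exp (((n:ℝ)+1) * log Bc) := by
      rw [show ((n:ℝ)+1) = ((n+1 : ℕ) : ℝ) from by push_cast; ring,
        ← Real.log_pow, Real.exp_log (pow_pos hBcpos _)]
    rw [h1]
    apply exp_le_exp.mpr
    have hloginv : Real.log (1 / Bc) = - Real.log Bc := by
      rw [one_div, Real.log_inv]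
    have h2 : ((n:ℝ)+1) * (- log Bc) = (((n:ℝ)+1)/n * (- log Bc)) * n := by field_simp
    have h3 : ((n:ℝ)+1) * (- log Bc) < ηt * n := by
      rw [h2]
      apply mul_lt_mul_of_pos_right _ hnpos
      calc ((n:ℝ)+1)/n * (- log Bc) = ((n:ℝ)+1)/n * log (1/Bc) := by rw [hloginv]
        _ < ηt := hn2
    nlinarith [ht.1, hηt]
  have hexpσ : exp (σ*t) * exp σ ^ n = exp (σ * (t + n)) := by
    rw [← Real.exp_nat_mul, ← Real.exp_add]; ring_nf
  have hexpu : exp (u*t) * exp u ^ n = exp (u * (t + n)) := by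
    rw [← Real.exp_nat_mul, ← Real.exp_add]; ring_nf
  refine ⟨?_, ?_, ?_, ?_⟩
  · rw [hstep]
    calc exp ((σ - ηt) * (t + n)) * ‖PL x‖
        = exp (-(ηt * (t+n))) * (exp (σ*t) * exp σ ^ n) * ‖PL x‖ := by
          rw [hexpσ, ← Real.exp_add]; ring_nf
      _ ≤ Bc^(n+1) * (exp (σ*t) * exp σ ^ n) * ‖PL x‖ := by
          apply mul_le_mul_of_nonneg_right _ (norm_nonneg _)
          exact mul_le_mul_of_nonneg_right hBbound (by positivity)
      _ = Bc * exp (σ*t) * (Bc^n * exp σ ^ n * ‖PL x‖) := by ring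
      _ ≤ Bc * exp (σ*t) * ‖PL (G (n:ℝ) x)‖ := by
          apply mul_le_mul_of_nonneg_left hLn1 (by positivity)
      _ ≤ ‖PL (G t (G (n:ℝ) x))‖ := hoL1
  · rw [hstep]
    calc ‖PL (G t (G (n:ℝ) x))‖ ≤ A * exp (σ*t) * ‖PL (G (n:ℝ) x)‖ := hoL2
      _ ≤ A * exp (σ*t) * (A^n * exp σ ^ n * ‖PL x‖) := by
          apply mul_le_mul_of_nonneg_left hLn2 (by positivity)
      _ = A^(n+1) * (exp (σ*t) * exp σ ^ n) * ‖PL x‖ := by ring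
      _ ≤ exp (ηt * (t+n)) * (exp (σ*t) * exp σ ^ n) * ‖PL x‖ := by
          apply mul_le_mul_of_nonneg_right _ (norm_nonneg _)
          exact mul_le_mul_of_nonneg_right hAbound (by positivity)
      _ = exp ((σ + ηt) * (t + n)) * ‖PL x‖ := by
          rw [hexpσ, ← Real.exp_add]; ring_nf
  · rw [hstep]
    calc exp ((u - ηt) * (t + n)) * ‖PU x‖
        = exp (-(ηt * (t+n))) * (exp (u*t) * exp u ^ n) * ‖PU x‖ := by
          rw [hexpu, ← Real.exp_add]; ring_nf
      _ ≤ Bc^(n+1) * (exp (u*t) * exp u ^ n) * ‖PU x‖ := by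
          apply mul_le_mul_of_nonneg_right _ (norm_nonneg _)
          exact mul_le_mul_of_nonneg_right hBbound (by positivity)
      _ = Bc * exp (u*t) * (Bc^n * exp u ^ n * ‖PU x‖) := by ring
      _ ≤ Bc * exp (u*t) * ‖PU (G (n:ℝ) x)‖ := by
          apply mul_le_mul_of_nonneg_left hUn1 (by positivity)
      _ ≤ ‖PU (G t (G (n:ℝ) x))‖ := hoU1
  · rw [hstep]
    calc ‖PU (G t (G (n:ℝ) x))‖ ≤ A * exp (u*t) * ‖PU (G (n:ℝ) x)‖ := hoU2
      _ ≤ A * exp (u*t) * (A^n * exp u ^ n * ‖PU x‖) := by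
          apply mul_le_mul_of_nonneg_left hUn2 (by positivity)
      _ = A^(n+1) * (exp (u*t) * exp u ^ n) * ‖PU x‖ := by ring
      _ ≤ exp (ηt * (t+n)) * (exp (u*t) * exp u ^ n) * ‖PU x‖ := by
          apply mul_le_mul_of_nonneg_right _ (norm_nonneg _)
          exact mul_le_mul_of_nonneg_right hAbound (by positivity)
      _ = exp ((u + ηt) * (t + n)) * ‖PU x‖ := by
          rw [hexpu, ← Real.exp_add]; ring_nf
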